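/- Let R be a G-graded ring, M a right G-graded R-module, and φ ∈ END_R(M)_e. Then φ = ε + α with ε a homogeneous idempotent endomorphism, α a homogeneous nilpotent endomorphism, and εα = αε, if and only if there is a direct sum decomposition M = A ⊕ B into graded submodules that are φ-invariant such that φ|_A is nilpotent in END_R(A) and (1 − φ)|_B is nilpotent in END_R(B). -/

import Mathlib

/-- A `G`-grading of a ring `R`: a family of additive subgroups `C g` with
`C g * C h ⊆ C (g*h)`, `1 ∈ C e`, and `R = ⊕_g C g` (internal direct sum). -/
structure Grading (G : Type*) [Group G] [DecidableEq G] (R : Type*) [Ring R] where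
  C : G → AddSubgroup R
  one_mem : (1 : R) ∈ C 1
  mul_mem : ∀ {g h : G} {a b : R}, a ∈ C g → b ∈ C h → a * b ∈ C (g * h)
  isInternal : DirectSum.IsInternal C

namespace Grading

variable {G : Type*} [Group G] [DecidableEq G] {R : Type*} [Ring R]

/-- An element is homogeneous if it lies in some component. -/
def Homogeneous (A : Grading G R) (a : R) : Prop := ∃ g, a ∈ A.C g

/-- A homogeneous element is graded nil clean if it is the sum of a homogeneous
idempotent and a homogeneous nilpotent. -/
def IsGradedNilClean (A : Grading G R) (a : R) : Prop :=
  ∃ f b : R, A.Homogeneous f ∧ IsIdempotentElem f ∧ A.Homogeneous b ∧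
    IsNilpotent b ∧ a = f + b

/-- A graded ring is graded nil clean if every homogeneous element is. -/
def GradedNilClean (A : Grading G R) : Prop :=
  ∀ a : R, A.Homogeneous a → A.IsGradedNilClean a

/-- Graded strongly nil clean element: the idempotent and nilpotent commute. -/
def IsGradedStronglyNilClean (A : Grading G R) (a : R) : Prop :=
  ∃ f b : R, A.Homogeneous f ∧ IsIdempotentElem f ∧ A.Homogeneous b ∧
    IsNilpotent b ∧ f * b = b * f ∧ a = f + b

def GradedStronglyNilClean (A : Grading G R) : Prop :=
  ∀ a : R, A.Homogeneous a → A.IsGradedStronglyNilClean a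

end Grading

section GradedModule

variable {G : Type*} [Group G] [DecidableEq G] {R : Type*} [Ring R]
variable {M : Type*} [AddCommGroup M] [Module Rᵐᵒᵖ M]

/-- An endomorphism of the graded right module `M` is homogeneous of degree `g`
if it maps `M_x` into `M_{gx}` for all `x`. -/
def EndDeg (ℳ : G → AddSubgroup M) (g : G) (f : Module.End Rᵐᵒᵖ M) : Prop :=
  ∀ x : G, ∀ m ∈ ℳ x, f m ∈ ℳ (g * x)

/-- A submodule is graded (homogeneous) if each of its elements lies in the sum
of its intersections with the components. -/
def GradedSubmodule (ℳ : G → AddSubgroup M) (A : Submodule Rᵐᵒᵖ M) : Prop :=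
  ∀ m ∈ A, m ∈ ⨆ x : G, (ℳ x ⊓ A.toAddSubgroup)

section Aux

variable {G : Type*} [DecidableEq G]
variable {M : Type*} [AddCommGroup M]

/-- Component of a finite sum. -/
lemma aux_decompose_sum (ℳ : G → AddSubgroup M) [DirectSum.Decomposition ℳ]
    {α : Type*} (s : Finset α) (t : α → M) (i : G) :
    (DirectSum.decompose ℳ (∑ y ∈ s, t y) i : M)
      = ∑ y ∈ s, (DirectSum.decompose ℳ (t y) i : M) := by
  classical
  induction s using Finset.induction with
  | empty => simp
  | insert _ _ h ih =>
      rw [Finset.sum_insert h, Finset.sum_insert h, DirectSum.decompose_add, ← ih]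
      simp

/-- Key commutation: a homogeneous additive map of degree `g` commutes with the
projections, up to shifting the index. -/
lemma aux_key [Group G] (ℳ : G → AddSubgroup M) [DirectSum.Decomposition ℳ]
    (f : M →+ M) (g : G) (hf : ∀ x : G, ∀ m ∈ ℳ x, f m ∈ ℳ (g * x))
    (m : M) (x : G) :
    (DirectSum.decompose ℳ (f m) (g * x) : M)
      = f (DirectSum.decompose ℳ m x : M) := by
  classical
  conv_lhs => rw [← DirectSum.sum_support_decompose ℳ m, map_sum, aux_decompose_sum]
  rw [Finset.sum_eq_single x]
  · exact DirectSum.decompose_of_mem_same ℳ (hf x _ (SetLike.coe_mem _))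
  · intro y _ hyx
    have h1 : f (DirectSum.decompose ℳ m y : M) ∈ ℳ (g * y) :=
      hf y _ (SetLike.coe_mem _)
    have h2 : g * y ≠ g * x := fun h => hyx (mul_left_cancel h)
    exact DirectSum.decompose_of_mem_ne ℳ h1 h2
  · intro hx
    rw [DFinsupp.notMem_support_iff.mp hx]
    simp

/-- All homogeneous components of an element of a graded subgroup belong to
the subgroup. -/
lemma aux_components (ℳ : G → AddSubgroup M) [DirectSum.Decomposition ℳ]
    (A : AddSubgroup M) {m : M} (hm : m ∈ ⨆ x : G, (ℳ x ⊓ A)) (x : G) :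
    (DirectSum.decompose ℳ m x : M) ∈ A := by
  classical
  refine AddSubgroup.iSup_induction (x := m) (fun y => ℳ y ⊓ A)
    (C := fun n => ∀ y : G, (DirectSum.decompose ℳ n y : M) ∈ A) hm ?_ ?_ ?_ x
  · intro i n hn y
    by_cases h : i = y
    · subst h; rw [DirectSum.decompose_of_mem_same ℳ hn.1]; exact hn.2
    · rw [DirectSum.decompose_of_mem_ne ℳ hn.1 h]; exact A.zero_mem
  · intro y
    simp only [DirectSum.decompose_zero, DirectSum.zero_apply, ZeroMemClass.coe_zero]
    exact A.zero_mem
  · intro a b ha hb y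
    rw [DirectSum.decompose_add]
    simpa using A.add_mem (ha y) (hb y)

end Aux

theorem stmt19' {G : Type*} [Group G] [DecidableEq G] {R : Type*} [Ring R]
    {M : Type*} [AddCommGroup M] [Module Rᵐᵒᵖ M]
    (ℳ : G → AddSubgroup M)
    (hM : DirectSum.IsInternal ℳ)
    (φ : Module.End Rᵐᵒᵖ M)
    (hφ : ∀ x : G, ∀ m ∈ ℳ x, φ m ∈ ℳ (1 * x)) :
    (∃ ε α : Module.End Rᵐᵒᵖ M,
      (∃ g, ∀ x : G, ∀ m ∈ ℳ x, ε m ∈ ℳ (g * x)) ∧ IsIdempotentElem ε ∧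
      (∃ g, ∀ x : G, ∀ m ∈ ℳ x, α m ∈ ℳ (g * x)) ∧ IsNilpotent α ∧
      ε * α = α * ε ∧ φ = ε + α) ↔
    (∃ A' B' : Submodule Rᵐᵒᵖ M, IsCompl A' B' ∧
      (∀ m ∈ A', m ∈ ⨆ x : G, (ℳ x ⊓ A'.toAddSubgroup)) ∧
      (∀ m ∈ B', m ∈ ⨆ x : G, (ℳ x ⊓ B'.toAddSubgroup)) ∧
      (∀ m ∈ A', φ m ∈ A') ∧ (∀ m ∈ B', φ m ∈ B') ∧
      (∃ n : ℕ, ∀ m ∈ A', (φ ^ n) m = 0) ∧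
      (∃ n : ℕ, ∀ m ∈ B', ((1 - φ) ^ n) m = 0)) := by
  classical
  haveI : DirectSum.Decomposition ℳ := hM.chooseDecomposition
  constructor
  · rintro ⟨ε, α, ⟨g, hε⟩, hidem, ⟨g', hα⟩, ⟨n, hn⟩, hcomm, rfl⟩
    have hεε : ∀ m : M, ε (ε m) = ε m := fun m => by
      conv_rhs => rw [← hidem]
      rfl
    refine ⟨LinearMap.ker ε, LinearMap.range ε, ?_, ?_, ?_, ?_, ?_, ?_, ?_⟩
    · constructor
      · rw [Submodule.disjoint_def]
        rintro m hk ⟨p, rfl⟩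
        have h0 : ε (ε p) = 0 := LinearMap.mem_ker.mp hk
        rw [hεε] at h0
        exact h0
      · rw [codisjoint_iff, eq_top_iff]
        intro m _
        refine Submodule.mem_sup.mpr ⟨m - ε m, ?_, ε m, ⟨m, rfl⟩, by abel⟩
        rw [LinearMap.mem_ker, map_sub, hεε, sub_self]
    · -- ker graded
      intro m hm
      rw [← DirectSum.sum_support_decompose ℳ m]
      refine AddSubgroup.sum_mem _ fun x _ => ?_
      refine AddSubgroup.mem_iSup_of_mem x (AddSubgroup.mem_inf.mpr
        ⟨SetLike.coe_mem _, (Submodule.mem_toAddSubgroup _).mpr ?_⟩)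
      rw [LinearMap.mem_ker]
      have h := aux_key ℳ ε.toAddMonoidHom g (fun x m hm => hε x m hm) m x
      rw [show ε.toAddMonoidHom m = ε m from rfl, LinearMap.mem_ker.mp hm] at h
      rw [show ε.toAddMonoidHom _ = ε _ from rfl] at h
      rw [← h]
      simp
    · -- range graded
      rintro m ⟨p, rfl⟩
      rw [← DirectSum.sum_support_decompose ℳ p, map_sum]
      refine AddSubgroup.sum_mem _ fun x _ => ?_
      refine AddSubgroup.mem_iSup_of_mem (g * x) (AddSubgroup.mem_inf.mpr
        ⟨hε x _ (SetLike.coe_mem _), (Submodule.mem_toAddSubgroup _).mpr ⟨_, rfl⟩⟩)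
    · -- φ-invariance of ker
      have hmul : ε * (ε + α) = (ε + α) * ε := by
        rw [mul_add, add_mul, hidem, hcomm]
      intro m hm
      rw [LinearMap.mem_ker, ← Module.End.mul_apply, hmul, Module.End.mul_apply,
        LinearMap.mem_ker.mp hm, map_zero]
    · -- φ-invariance of range
      have hmul : ε * (ε + α) = (ε + α) * ε := by
        rw [mul_add, add_mul, hidem, hcomm]
      rintro m ⟨p, rfl⟩
      exact ⟨(ε + α) p, by rw [← Module.End.mul_apply, hmul, Module.End.mul_apply]⟩
    · -- nilpotent on ker
      have hαker : ∀ m : M, ε m = 0 → ε (α m) = 0 := fun m h => by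
        rw [← Module.End.mul_apply, hcomm, Module.End.mul_apply, h, map_zero]
      have key : ∀ k : ℕ, ∀ m : M, ε m = 0 → ((ε + α) ^ k) m = (α ^ k) m := by
        intro k
        induction k with
        | zero => intro m _; simp
        | succ k ih =>
            intro m hm
            rw [pow_succ, pow_succ, Module.End.mul_apply, Module.End.mul_apply]
            have h1 : (ε + α) m = α m := by rw [LinearMap.add_apply, hm, zero_add]
            rw [h1]
            exact ih _ (hαker m hm)
      exact ⟨n, fun m hm => by
        rw [key n m (LinearMap.mem_ker.mp hm), hn, LinearMap.zero_apply]⟩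
    · -- (1-φ) nilpotent on range
      have hεr : ∀ m : M, ε m = m → ε (α m) = α m := fun m h => by
        rw [← Module.End.mul_apply, hcomm, Module.End.mul_apply, h]
      have key : ∀ k : ℕ, ∀ m : M, ε m = m → ((1 - (ε + α)) ^ k) m = ((-α) ^ k) m := by
        intro k
        induction k with
        | zero => intro m _; simp
        | succ k ih =>
            intro m hm
            rw [pow_succ, pow_succ, Module.End.mul_apply, Module.End.mul_apply]
            have h1 : (1 - (ε + α)) m = (-α) m := by
              rw [LinearMap.sub_apply, LinearMap.add_apply, Module.End.one_apply, hm,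
                LinearMap.neg_apply]
              abel
            rw [h1]
            refine ih _ ?_
            rw [LinearMap.neg_apply, map_neg, hεr m hm]
      have hnegn : (-α) ^ n = 0 := by rw [neg_pow, hn, mul_zero]
      refine ⟨n, ?_⟩
      rintro m ⟨p, rfl⟩
      rw [key n (ε p) (hεε p), hnegn, LinearMap.zero_apply]
  · rintro ⟨A', B', hcompl, hA, hB, hφA, hφB, ⟨nA, hnA⟩, ⟨nB, hnB⟩⟩
    set ε : Module.End Rᵐᵒᵖ M :=
      B'.subtype ∘ₗ (B'.linearProjOfIsCompl A' hcompl.symm) with hεdef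
    have hεmem : ∀ m : M, ε m ∈ B' := fun m => SetLike.coe_mem _
    have hεA : ∀ a ∈ A', ε a = 0 := by
      intro a ha
      have := Submodule.linearProjOfIsCompl_apply_right' hcompl.symm ha
      simp only [hεdef, LinearMap.comp_apply, this, Submodule.coe_subtype,
        ZeroMemClass.coe_zero]
      exact congrArg Subtype.val this
    have hεB : ∀ b ∈ B', ε b = b := by
      intro b hb
      have := Submodule.linearProjOfIsCompl_apply_left hcompl.symm ⟨b, hb⟩
      simp only [hεdef, LinearMap.comp_apply, Submodule.coe_subtype]
      exact congrArg Subtype.val this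
    have hdecomp : ∀ m : M, ∃ a ∈ A', ∃ b ∈ B', m = a + b := by
      intro m
      have hm : m ∈ A' ⊔ B' := by
        rw [codisjoint_iff.mp hcompl.codisjoint]; trivial
      obtain ⟨a, ha, b, hb, hab⟩ := Submodule.mem_sup.mp hm
      exact ⟨a, ha, b, hb, hab.symm⟩
    -- ε is homogeneous of degree 1
    have hcomp : ∀ x : G, ∀ m ∈ ℳ x, ε m ∈ ℳ x := by
      intro x m hm
      obtain ⟨a, ha, b, hb, rfl⟩ := hdecomp m
      have hay : ∀ y : G, y ≠ x → (DirectSum.decompose ℳ a y : M) = 0 := by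
        intro y hy
        have h1 : (DirectSum.decompose ℳ a y : M) ∈ A' :=
          aux_components ℳ A'.toAddSubgroup (hA a ha) y
        have h2 : (DirectSum.decompose ℳ b y : M) ∈ B' :=
          aux_components ℳ B'.toAddSubgroup (hB b hb) y
        have h3 : (DirectSum.decompose ℳ (a + b) y : M) = 0 :=
          DirectSum.decompose_of_mem_ne ℳ hm (Ne.symm hy)
        rw [DirectSum.decompose_add] at h3
        simp only [DirectSum.add_apply, AddSubgroup.coe_add] at h3
        have h4 : (DirectSum.decompose ℳ a y : M) = -(DirectSum.decompose ℳ b y : M) :=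
          eq_neg_of_add_eq_zero_left h3
        refine Submodule.disjoint_def.mp hcompl.disjoint _ h1 ?_
        rw [h4]; exact B'.neg_mem h2
      have hax : a ∈ ℳ x := by
        rw [← DirectSum.sum_support_decompose ℳ a]
        refine AddSubgroup.sum_mem _ fun y _ => ?_
        by_cases h : y = x
        · subst h; exact SetLike.coe_mem _
        · rw [hay y h]; exact zero_mem _
      have hbx : b ∈ ℳ x := by
        have := (ℳ x).sub_mem hm hax
        simpa using this
      rw [map_add, hεA a ha, hεB b hb, zero_add]
      exact hbx
    set α : Module.End Rᵐᵒᵖ M := φ - ε with hαdef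
    have hαA : ∀ a ∈ A', α a = φ a := by
      intro a ha
      rw [hαdef, LinearMap.sub_apply, hεA a ha, sub_zero]
    have hαAmem : ∀ a ∈ A', α a ∈ A' := fun a ha => by
      rw [hαA a ha]; exact hφA a ha
    have hαB : ∀ b ∈ B', α b = (φ - 1) b := by
      intro b hb
      rw [hαdef, LinearMap.sub_apply, LinearMap.sub_apply, hεB b hb, Module.End.one_apply]
    have hαBmem : ∀ b ∈ B', α b ∈ B' := fun b hb => by
      rw [hαdef, LinearMap.sub_apply]
      exact B'.sub_mem (hφB b hb) (hεmem b)
    refine ⟨ε, α, ⟨1, fun x m hm => by rw [one_mul]; exact hcomp x m hm⟩, ?_, ?_, ?_, ?_, ?_⟩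
    · -- idempotent
      refine LinearMap.ext fun m => ?_
      rw [Module.End.mul_apply]
      exact hεB (ε m) (hεmem m)
    · -- α homogeneous of degree 1
      refine ⟨1, fun x m hm => ?_⟩
      rw [hαdef, LinearMap.sub_apply]
      exact (ℳ (1 * x)).sub_mem (hφ x m hm) (by rw [one_mul]; exact hcomp x m hm)
    · -- α nilpotent
      have keyA : ∀ k : ℕ, ∀ a ∈ A', (α ^ k) a = (φ ^ k) a := by
        intro k
        induction k with
        | zero => intro a _; simp
        | succ k ih =>
            intro a ha
            rw [pow_succ, pow_succ, Module.End.mul_apply, Module.End.mul_apply,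
              hαA a ha]
            exact ih _ (hφA a ha)
      have keyB : ∀ k : ℕ, ∀ b ∈ B', (α ^ k) b = ((φ - 1) ^ k) b := by
        intro k
        induction k with
        | zero => intro b _; simp
        | succ k ih =>
            intro b hb
            rw [pow_succ, pow_succ, Module.End.mul_apply, Module.End.mul_apply,
              hαB b hb]
            refine ih _ ?_
            rw [LinearMap.sub_apply, Module.End.one_apply]
            exact B'.sub_mem (hφB b hb) hb
      have hA0 : ∀ a ∈ A', (α ^ nA) a = 0 := fun a ha => by
        rw [keyA nA a ha]; exact hnA a ha
      have hB0 : ∀ b ∈ B', (α ^ nB) b = 0 := by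
        intro b hb
        rw [keyB nB b hb]
        have h1 : (φ - 1 : Module.End Rᵐᵒᵖ M) = -(1 - φ) := by rw [neg_sub]
        rw [h1, neg_pow, Module.End.mul_apply, hnB b hb, map_zero]
      have hpowA : ∀ k : ℕ, ∀ a ∈ A', (α ^ k) a ∈ A' := by
        intro k
        induction k with
        | zero => intro a ha; simpa using ha
        | succ k ih =>
            intro a ha
            rw [pow_succ, Module.End.mul_apply]
            exact ih _ (hαAmem a ha)
      have hpowB : ∀ k : ℕ, ∀ b ∈ B', (α ^ k) b ∈ B' := by
        intro k
        induction k with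
        | zero => intro b hb; simpa using hb
        | succ k ih =>
            intro b hb
            rw [pow_succ, Module.End.mul_apply]
            exact ih _ (hαBmem b hb)
      refine ⟨nA + nB, LinearMap.ext fun m => ?_⟩
      obtain ⟨a, ha, b, hb, rfl⟩ := hdecomp m
      rw [LinearMap.zero_apply, map_add, pow_add, Module.End.mul_apply,
        Module.End.mul_apply, hA0 _ (hpowA nB a ha), hB0 b hb, map_zero,
        add_zero]
    · -- commutation
      refine LinearMap.ext fun m => ?_
      rw [Module.End.mul_apply, Module.End.mul_apply]
      obtain ⟨a, ha, b, hb, rfl⟩ := hdecomp m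
      rw [map_add α a b, map_add ε (α a) (α b), hεA _ (hαAmem a ha), hεB _ (hαBmem b hb),
        zero_add, map_add ε a b, hεA a ha, hεB b hb, zero_add]
    · rw [hαdef]; abel

/-- Let `M = ⊕_x M_x` be a right `G`-graded `R`-module and
`φ ∈ END_R(M)_e`.  Then `φ = ε + α` with `ε` a homogeneous idempotent
endomorphism, `α` a homogeneous nilpotent endomorphism and `εα = αε`, iff there
is a direct sum decomposition `M = A ⊕ B` into graded `φ`-invariant submodules
such that `φ|_A` is nilpotent and `(1 - φ)|_B` is nilpotent. -/
theorem stmt19 {G : Type*} [Group G] [DecidableEq G] {R : Type*} [Ring R]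
    {M : Type*} [AddCommGroup M] [Module Rᵐᵒᵖ M]
    (A : Grading G R) (ℳ : G → AddSubgroup M)
    (hsmul : ∀ {x g : G} {m : M} {r : R}, m ∈ ℳ x → r ∈ A.C g →
      (MulOpposite.op r) • m ∈ ℳ (x * g))
    (hM : DirectSum.IsInternal ℳ)
    (φ : Module.End Rᵐᵒᵖ M) (hφ : EndDeg ℳ 1 φ) :
    (∃ ε α : Module.End Rᵐᵒᵖ M, (∃ g, EndDeg ℳ g ε) ∧ IsIdempotentElem ε ∧
      (∃ g, EndDeg ℳ g α) ∧ IsNilpotent α ∧ ε * α = α * ε ∧ φ = ε + α) ↔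
    (∃ A' B' : Submodule Rᵐᵒᵖ M, IsCompl A' B' ∧
      GradedSubmodule ℳ A' ∧ GradedSubmodule ℳ B' ∧
      (∀ m ∈ A', φ m ∈ A') ∧ (∀ m ∈ B', φ m ∈ B') ∧
      (∃ n : ℕ, ∀ m ∈ A', (φ ^ n) m = 0) ∧
      (∃ n : ℕ, ∀ m ∈ B', ((1 - φ) ^ n) m = 0)) := by
  exact stmt19' ℳ hM φ hφ

end GradedModule
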